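/- arXiv:2602.04574 — 4 statements merged into one kernel-verified Lean document; each statement's English description precedes it below -/
import Mathlib

section
/- Let φ_1,…,φ_n ≥ 0 with Σ_{k=1}^n φ_k = 1 and max_{k} φ_k ≤ K for some K > 0. Let I_1,…,I_m be i.i.d. indices distributed uniformly on {1,…,n}, and set Φ = Σ_{j=1}^m φ_{I_j}. Then E[Φ] = m/n, and P(Φ ≤ m/(2n)) ≤ P(|Φ − m/n| ≥ m/(2n)) ≤ 2 exp(−(3/40) · m/(nK)). -/
open MeasureTheory ProbabilityTheory Real

/-- **Lemma 2 (Concentration of the cumulative propagation score Φ_q).**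
Let `φ_1, …, φ_n ≥ 0` with `∑ φ_k = 1` and `max_k φ_k ≤ K`.  Let `I_1, …, I_m` be
i.i.d. indices uniformly distributed on `{1, …, n}` and `Φ = ∑_j φ_{I_j}`.  Then
`E[Φ] = m/n`, and
`P(Φ ≤ m/(2n)) ≤ P(|Φ − m/n| ≥ m/(2n)) ≤ 2 exp(−(3/40)·m/(nK))`. -/
theorem pls_concentration_of_cumulative_score
    {Ω : Type*} [MeasureSpace Ω] [IsProbabilityMeasure (ℙ : Measure Ω)]
    (n m : ℕ) (hn : 0 < n)
    (φ : Fin n → ℝ) (hφ0 : ∀ k, 0 ≤ φ k) (hφsum : ∑ k, φ k = 1)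
    (K : ℝ) (hK : 0 < K) (hφK : ∀ k, φ k ≤ K)
    (I : Fin m → Ω → Fin n)
    (hmeas : ∀ j, Measurable (I j))
    (hindep : iIndepFun I ℙ)
    (hunif : ∀ j, ∀ k : Fin n, ℙ {ω | I j ω = k} = (n : ENNReal)⁻¹) :
    (∫ ω, (∑ j, φ (I j ω)) ∂ℙ) = (m : ℝ) / n ∧
    ℙ {ω | (∑ j, φ (I j ω)) ≤ (m : ℝ) / (2 * n)}
      ≤ ℙ {ω | |(∑ j, φ (I j ω)) - (m : ℝ) / n| ≥ (m : ℝ) / (2 * n)} ∧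
    ℙ {ω | |(∑ j, φ (I j ω)) - (m : ℝ) / n| ≥ (m : ℝ) / (2 * n)}
      ≤ ENNReal.ofReal (2 * Real.exp (-(3 / 40) * m / (n * K))) := by
  classical
  have hnR : (0:ℝ) < n := Nat.cast_pos.mpr hn
  have hφm : Measurable φ := measurable_of_finite φ
  have hYm : ∀ j, Measurable fun ω => φ (I j ω) := fun j => hφm.comp (hmeas j)
  set S : Ω → ℝ := fun ω => ∑ j, φ (I j ω) with hSdef
  have hSmeas : Measurable S := Finset.measurable_sum _ fun j _ => hYm j
  -- law of φ ∘ I j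
  have hlaw : ∀ (j : Fin m) (f : Fin n → ℝ),
      (∫ ω, f (I j ω) ∂ℙ) = ∑ k, (n:ℝ)⁻¹ * f k := by
    intro j f
    have hmap : ∀ k : Fin n, Measure.map (I j) ℙ {k} = (n : ENNReal)⁻¹ := by
      intro k
      rw [Measure.map_apply (hmeas j) (measurableSet_singleton k)]
      exact hunif j k
    have hprob : IsProbabilityMeasure (Measure.map (I j) ℙ) :=
      Measure.isProbabilityMeasure_map (hmeas j).aemeasurable
    rw [← integral_map (hmeas j).aemeasurable
        (measurable_of_finite f).aestronglyMeasurable,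
      integral_fintype (Integrable.of_finite)]
    refine Finset.sum_congr rfl fun k _ => ?_
    rw [Measure.real, hmap k, smul_eq_mul]
    congr 1
    simp
  -- mean
  have hYint : ∀ j, Integrable (fun ω => φ (I j ω)) ℙ := by
    intro j
    refine Integrable.mono' (integrable_const K) (hYm j).aestronglyMeasurable
      (ae_of_all _ fun ω => ?_)
    rw [Real.norm_eq_abs, abs_of_nonneg (hφ0 _)]
    exact hφK _
  have hmean : (∫ ω, S ω ∂ℙ) = (m:ℝ) / n := by
    rw [hSdef]
    rw [integral_finset_sum _ fun j _ => hYint j]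
    have h1 : ∀ j : Fin m, j ∈ Finset.univ → (∫ ω, φ (I j ω) ∂ℙ) = (n:ℝ)⁻¹ := by
      intro j _
      rw [hlaw j φ, ← Finset.mul_sum, hφsum, mul_one]
    rw [Finset.sum_congr rfl h1, Finset.sum_const, Finset.card_univ, Fintype.card_fin,
      nsmul_eq_mul, div_eq_mul_inv]
  -- integrability of exponential moments
  have hexpint : ∀ (t : ℝ) (j : Fin m), Integrable (fun ω => exp (t * φ (I j ω))) ℙ := by
    intro t j
    refine Integrable.mono' (integrable_const (exp (|t| * K)))
      (((hYm j).const_mul t).exp).aestronglyMeasurable (ae_of_all _ fun ω => ?_)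
    rw [Real.norm_eq_abs, Real.abs_exp]
    refine Real.exp_le_exp.mpr (le_trans (le_abs_self _) ?_)
    rw [abs_mul]
    refine mul_le_mul_of_nonneg_left ?_ (abs_nonneg t)
    rw [abs_of_nonneg (hφ0 _)]
    exact hφK _
  have hSbound : ∀ ω, |S ω| ≤ m * K := by
    intro ω
    rw [abs_of_nonneg (Finset.sum_nonneg fun j _ => hφ0 _)]
    calc S ω ≤ ∑ _j : Fin m, K := Finset.sum_le_sum fun j _ => hφK _
      _ = m * K := by rw [Finset.sum_const, Finset.card_univ, Fintype.card_fin, nsmul_eq_mul]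
  have hintS : ∀ t : ℝ, Integrable (fun ω => exp (t * S ω)) ℙ := by
    intro t
    refine Integrable.mono' (integrable_const (exp (|t| * (m * K))))
      ((hSmeas.const_mul t).exp).aestronglyMeasurable (ae_of_all _ fun ω => ?_)
    rw [Real.norm_eq_abs, Real.abs_exp]
    refine Real.exp_le_exp.mpr (le_trans (le_abs_self _) ?_)
    rw [abs_mul]
    exact mul_le_mul_of_nonneg_left (hSbound ω) (abs_nonneg t)
  -- single-variable mgf bound
  have hmgf1 : ∀ (t : ℝ) (j : Fin m),
      mgf (fun ω => φ (I j ω)) ℙ t ≤ exp ((exp (t * K) - 1) / (n * K)) := by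
    intro t j
    have h1 : mgf (fun ω => φ (I j ω)) ℙ t = ∑ k, (n:ℝ)⁻¹ * exp (t * φ k) :=
      hlaw j fun k => exp (t * φ k)
    have hconv : ∀ k, exp (t * φ k) ≤ 1 + φ k / K * (exp (t * K) - 1) := by
      intro k
      have hθ0 : 0 ≤ φ k / K := div_nonneg (hφ0 k) hK.le
      have hθ1 : φ k / K ≤ 1 := (div_le_one hK).mpr (hφK k)
      have hc := convexOn_exp.2 (Set.mem_univ (0:ℝ)) (Set.mem_univ (t*K))
        (by linarith : (0:ℝ) ≤ 1 - φ k / K) hθ0 (by ring)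
      simp only [smul_eq_mul, mul_zero, zero_add, Real.exp_zero, mul_one] at hc
      have harg : φ k / K * (t * K) = t * φ k := by field_simp
      rw [harg] at hc
      linarith
    have hsum2 : ∑ k, (n:ℝ)⁻¹ * (1 + φ k / K * (exp (t*K) - 1))
        = 1 + (exp (t*K) - 1) / (n * K) := by
      rw [← Finset.mul_sum, Finset.sum_add_distrib, Finset.sum_const, Finset.card_univ,
        Fintype.card_fin, ← Finset.sum_mul, ← Finset.sum_div, hφsum]
      field_simp
      simp
    calc mgf (fun ω => φ (I j ω)) ℙ t
        = ∑ k, (n:ℝ)⁻¹ * exp (t * φ k) := h1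
      _ ≤ ∑ k, (n:ℝ)⁻¹ * (1 + φ k / K * (exp (t*K) - 1)) :=
          Finset.sum_le_sum fun k _ =>
            mul_le_mul_of_nonneg_left (hconv k) (by positivity)
      _ = 1 + (exp (t*K) - 1) / (n * K) := hsum2
      _ ≤ exp ((exp (t*K) - 1) / (n * K)) := by
          have := Real.add_one_le_exp ((exp (t*K) - 1) / (n * K))
          linarith
  -- mgf of the sum
  have hYind : iIndepFun (fun j ω => φ (I j ω)) ℙ :=
    hindep.comp (fun _ => φ) fun _ => hφm
  have hSeq : S = ∑ j : Fin m, (fun ω => φ (I j ω)) := by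
    ext ω; rw [Finset.sum_apply]
  have hmgfS : ∀ t : ℝ, mgf S ℙ t ≤ exp ((m:ℝ) * (exp (t*K) - 1) / (n * K)) := by
    intro t
    rw [hSeq, hYind.mgf_sum (fun j => hYm j) Finset.univ]
    calc ∏ j : Fin m, mgf (fun ω => φ (I j ω)) ℙ t
        ≤ ∏ _j : Fin m, exp ((exp (t*K) - 1) / (n * K)) :=
          Finset.prod_le_prod (fun j _ => mgf_nonneg) fun j _ => hmgf1 t j
      _ = exp ((m:ℝ) * ((exp (t*K) - 1) / (n * K))) := by
          rw [Finset.prod_const, Finset.card_univ, Fintype.card_fin, ← Real.exp_nat_mul]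
      _ = _ := by rw [mul_div_assoc]
  have hcnonneg : (0:ℝ) ≤ (m:ℝ) / (n * K) := by positivity
  -- numeric bounds
  have hexphalf : exp (1/2 : ℝ) ≤ 67/40 := by
    have h1 : exp (1/2 : ℝ) * exp (1/2 : ℝ) = exp 1 := by rw [← Real.exp_add]; norm_num
    nlinarith [Real.exp_one_lt_d9, Real.exp_pos (1/2 : ℝ)]
  have hexpneg : exp (-1 : ℝ) ≤ 17/40 := by
    have h1 : exp (-1 : ℝ) * exp 1 = 1 := by rw [← Real.exp_add]; norm_num
    nlinarith [Real.exp_one_gt_d9, Real.exp_pos (-1 : ℝ)]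
  -- upper tail
  have hupper : (ℙ {ω | 3 * (m:ℝ) / (2 * n) ≤ S ω}).toReal
      ≤ exp (-(3/40) * m / (n * K)) := by
    have h := measure_ge_le_exp_mul_mgf (μ := ℙ) (X := S) (3 * (m:ℝ) / (2 * n))
      (t := 1/(2*K)) (by positivity) (hintS _)
    refine h.trans ?_
    have hKK : (1/(2*K)) * K = 1/2 := by field_simp
    have h2 := hmgfS (1/(2*K))
    rw [hKK] at h2
    calc exp (-(1/(2*K)) * (3 * (m:ℝ) / (2 * n))) * mgf S ℙ (1/(2*K))
        ≤ exp (-(1/(2*K)) * (3 * (m:ℝ) / (2 * n)))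
            * exp ((m:ℝ) * (exp (1/2:ℝ) - 1) / (n * K)) :=
          mul_le_mul_of_nonneg_left h2 (Real.exp_pos _).le
      _ = exp ((m:ℝ) / (n * K) * (exp (1/2:ℝ) - 1 - 3/4)) := by
          rw [← Real.exp_add]; congr 1; field_simp; ring
      _ ≤ exp (-(3/40) * m / (n * K)) := by
          refine Real.exp_le_exp.mpr ?_
          have h3 : exp (1/2:ℝ) - 1 - 3/4 ≤ -(3/40) := by linarith
          have h4 := mul_le_mul_of_nonneg_left h3 hcnonneg
          calc (m:ℝ) / (n * K) * (exp (1/2:ℝ) - 1 - 3/4)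
              ≤ (m:ℝ) / (n * K) * (-(3/40)) := h4
            _ = -(3/40) * m / (n * K) := by ring
  -- lower tail
  have hlower : (ℙ {ω | S ω ≤ (m:ℝ) / (2 * n)}).toReal
      ≤ exp (-(3/40) * m / (n * K)) := by
    have h := measure_le_le_exp_mul_mgf (μ := ℙ) (X := S) ((m:ℝ) / (2 * n))
      (t := -(1/K)) (neg_nonpos.mpr (by positivity)) (hintS _)
    refine h.trans ?_
    have hKK : (-(1/K)) * K = -1 := by field_simp
    have h2 := hmgfS (-(1/K))
    rw [hKK] at h2
    calc exp (-(-(1/K)) * ((m:ℝ) / (2 * n))) * mgf S ℙ (-(1/K))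
        ≤ exp (-(-(1/K)) * ((m:ℝ) / (2 * n)))
            * exp ((m:ℝ) * (exp (-1:ℝ) - 1) / (n * K)) :=
          mul_le_mul_of_nonneg_left h2 (Real.exp_pos _).le
      _ = exp ((m:ℝ) / (n * K) * (exp (-1:ℝ) - 1 + 1/2)) := by
          rw [← Real.exp_add]; congr 1; field_simp; ring
      _ ≤ exp (-(3/40) * m / (n * K)) := by
          refine Real.exp_le_exp.mpr ?_
          have h3 : exp (-1:ℝ) - 1 + 1/2 ≤ -(3/40) := by linarith
          have h4 := mul_le_mul_of_nonneg_left h3 hcnonneg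
          calc (m:ℝ) / (n * K) * (exp (-1:ℝ) - 1 + 1/2)
              ≤ (m:ℝ) / (n * K) * (-(3/40)) := h4
            _ = -(3/40) * m / (n * K) := by ring
  -- arithmetic identity
  have hid : (m:ℝ) / (2 * n) + (m:ℝ) / (2 * n) = (m:ℝ) / n := by
    field_simp; ring
  refine ⟨hmean, ?_, ?_⟩
  · -- monotonicity
    refine measure_mono fun ω hω => ?_
    simp only [Set.mem_setOf_eq] at hω ⊢
    have h1 : (m:ℝ) / (2 * n) ≤ (m:ℝ) / n - S ω := by
      have := hω; simp only [hSdef] at *; linarith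
    calc (m:ℝ) / (2 * n) ≤ (m:ℝ) / n - S ω := h1
      _ = -(S ω - (m:ℝ) / n) := by ring
      _ ≤ |S ω - (m:ℝ) / n| := neg_le_abs _
  · -- concentration
    have hsplit : {ω | |S ω - (m:ℝ) / n| ≥ (m:ℝ) / (2 * n)}
        ⊆ {ω | 3 * (m:ℝ) / (2 * n) ≤ S ω} ∪ {ω | S ω ≤ (m:ℝ) / (2 * n)} := by
      intro ω hω
      simp only [Set.mem_setOf_eq, ge_iff_le] at hω
      rcases le_abs.mp hω with h | h
      · left
        simp only [Set.mem_setOf_eq]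
        have : 3 * (m:ℝ) / (2 * n) = (m:ℝ)/(2*n) + (m:ℝ)/n := by
          field_simp; ring
        linarith
      · right
        simp only [Set.mem_setOf_eq]
        linarith
    calc ℙ {ω | |S ω - (m:ℝ) / n| ≥ (m:ℝ) / (2 * n)}
        ≤ ℙ {ω | 3 * (m:ℝ) / (2 * n) ≤ S ω} + ℙ {ω | S ω ≤ (m:ℝ) / (2 * n)} :=
          (measure_mono hsplit).trans (measure_union_le _ _)
      _ = ENNReal.ofReal ((ℙ {ω | 3 * (m:ℝ) / (2 * n) ≤ S ω}).toReal)
            + ENNReal.ofReal ((ℙ {ω | S ω ≤ (m:ℝ) / (2 * n)}).toReal) := by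
          rw [ENNReal.ofReal_toReal (measure_ne_top _ _),
            ENNReal.ofReal_toReal (measure_ne_top _ _)]
      _ ≤ ENNReal.ofReal ((ℙ {ω | 3 * (m:ℝ) / (2 * n) ≤ S ω}).toReal
            + (ℙ {ω | S ω ≤ (m:ℝ) / (2 * n)}).toReal) :=
          (ENNReal.ofReal_add ENNReal.toReal_nonneg ENNReal.toReal_nonneg).symm.le
      _ ≤ ENNReal.ofReal (2 * Real.exp (-(3 / 40) * m / (n * K))) := by
          refine ENNReal.ofReal_le_ofReal ?_
          linarith
end

section
/- Let S be an n×n right-stochastic matrix (nonnegative entries, row sums 1), α ∈ (0,1), q ∈ {1,…,n}, l ∈ ℕ, and J ⊂ {1,…,n} a set of indices such that (S^i)_{q,j} = 0 for every j ∈ J and every i with 0 ≤ i < l (i.e., no walk of length less than l in the graph connects q to any j ∈ J). Then Σ_{j∈J} (1−α) ((I − αS)^{-1})_{q,j} ≤ α^l. -/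
open Matrix Finset

attribute [local instance] Matrix.linftyOpNormedRing Matrix.linftyOpNormedAlgebra

set_option maxHeartbeats 1000000 in
/-- **Path-length bound on heat-kernel weights.**  Let `S` be an `n×n`
right-stochastic matrix, `α ∈ (0,1)`, `q` a row index, `l ∈ ℕ`, and `J` a set of
column indices such that `(S^i)_{q,j} = 0` for every `j ∈ J` and every `i < l`
(no walk of length `< l` connects `q` to `J`).  Then the total normalized
heat-kernel weight that `q` receives from `J` satisfies
`∑_{j ∈ J} (1−α)·((I − αS)⁻¹)_{q,j} ≤ α^l`. -/
theorem pls_weight_outside_via_path_length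
    (n : ℕ) (S : Matrix (Fin n) (Fin n) ℝ)
    (hnonneg : ∀ i j, 0 ≤ S i j)
    (hrow : ∀ i, ∑ j, S i j = 1)
    (α : ℝ) (hα0 : 0 < α) (hα1 : α < 1)
    (q : Fin n) (l : ℕ) (J : Finset (Fin n))
    (hJ : ∀ j ∈ J, ∀ i < l, (S ^ i) q j = 0) :
    ∑ j ∈ J, (1 - α) * (1 - α • S)⁻¹ q j ≤ α ^ l := by
  classical
  rcases Nat.eq_zero_or_pos n with hn | hn
  · subst hn
    have : J = ∅ := Finset.eq_empty_of_isEmpty J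
    simp [this]
    positivity
  haveI : Nonempty (Fin n) := ⟨⟨0, hn⟩⟩
  -- powers of S are stochastic
  have hpow : ∀ i : ℕ, (∀ a b, 0 ≤ (S ^ i) a b) ∧ ∀ a, ∑ b, (S ^ i) a b = 1 := by
    intro i
    induction i with
    | zero =>
      constructor
      · intro a b
        by_cases h : a = b <;> simp [Matrix.one_apply, h]
      · intro a; simp [Matrix.one_apply]
    | succ i ih =>
      constructor
      · intro a b
        rw [pow_succ, Matrix.mul_apply]
        exact Finset.sum_nonneg fun k _ => mul_nonneg (ih.1 a k) (hnonneg k b)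
      · intro a
        simp_rw [pow_succ, Matrix.mul_apply]
        rw [Finset.sum_comm]
        simp_rw [← Finset.mul_sum, hrow, mul_one]
        exact ih.2 a
  -- norm bound
  have hSnorm : ‖S‖ ≤ 1 := by
    rw [Matrix.linfty_opNorm_def]
    have h : (Finset.univ.sup fun i => ∑ j, ‖S i j‖₊) ≤ (1 : NNReal) := by
      refine Finset.sup_le fun i _ => ?_
      rw [← NNReal.coe_le_coe, NNReal.coe_sum, NNReal.coe_one]
      simp_rw [coe_nnnorm, Real.norm_of_nonneg (hnonneg i _)]
      exact (hrow i).le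
    exact_mod_cast h
  have hlt : ‖α • S‖ < 1 := by
    rw [norm_smul, Real.norm_of_nonneg hα0.le]
    calc α * ‖S‖ ≤ α * 1 := by nlinarith [norm_nonneg S]
    _ < 1 := by linarith
  -- geometric series for the inverse
  have hgeo : HasSum (fun i : ℕ => (α • S) ^ i) (Ring.inverse (1 - α • S)) :=
    hasSum_geom_series_inverse _ hlt
  have hinv : (1 - α • S)⁻¹ = Ring.inverse (1 - α • S) :=
    Matrix.nonsing_inv_eq_ringInverse _
  -- entrywise sums via continuous linear evaluation
  have hentry : ∀ j : Fin n,
      HasSum (fun i : ℕ => α ^ i * (S ^ i) q j) ((1 - α • S)⁻¹ q j) := by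
    intro j
    have hb : ∀ A : Matrix (Fin n) (Fin n) ℝ, ‖A q j‖ ≤ 1 * ‖A‖ := by
      intro A
      rw [one_mul, Matrix.linfty_opNorm_def]
      calc ‖A q j‖ ≤ ∑ k, ‖A q k‖ :=
            Finset.single_le_sum (f := fun k => ‖A q k‖)
              (fun k _ => norm_nonneg _) (Finset.mem_univ j)
      _ ≤ _ := by
          have h2 : (∑ k, ‖A q k‖₊ : NNReal) ≤ Finset.univ.sup (fun i => ∑ k, ‖A i k‖₊) :=
            Finset.le_sup (f := fun i => ∑ k, ‖A i k‖₊) (Finset.mem_univ q)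
          rw [← NNReal.coe_le_coe, NNReal.coe_sum] at h2
          simp_rw [coe_nnnorm] at h2
          exact h2
    let φ₀ : Matrix (Fin n) (Fin n) ℝ →ₗ[ℝ] ℝ :=
      { toFun := fun A => A q j
        map_add' := fun _ _ => rfl
        map_smul' := fun _ _ => rfl }
    let φ : Matrix (Fin n) (Fin n) ℝ →L[ℝ] ℝ := LinearMap.mkContinuous φ₀ 1 hb
    have hm := hgeo.mapL φ
    have key : (fun i : ℕ => φ ((α • S) ^ i)) = fun i => α ^ i * (S ^ i) q j := by
      funext i
      show ((α • S) ^ i) q j = _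
      rw [smul_pow, Matrix.smul_apply, smul_eq_mul]
    rw [hinv]
    exact key ▸ hm
  have hsummable : ∀ j : Fin n, Summable fun i : ℕ => α ^ i * (S ^ i) q j :=
    fun j => (hentry j).summable
  -- sum over J
  have hW : HasSum (fun i : ℕ => α ^ i * ∑ j ∈ J, (S ^ i) q j)
      (∑ j ∈ J, (1 - α • S)⁻¹ q j) := by
    have := hasSum_sum (f := fun j i => α ^ i * (S ^ i) q j)
      (fun j (_ : j ∈ J) => hentry j)
    simpa [Finset.mul_sum] using this
  set w : ℕ → ℝ := fun i => ∑ j ∈ J, (S ^ i) q j with hw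
  have hw0 : ∀ i, 0 ≤ w i := fun i => Finset.sum_nonneg fun j _ => (hpow i).1 q j
  have hw1 : ∀ i, w i ≤ 1 := by
    intro i
    calc w i ≤ ∑ j, (S ^ i) q j :=
          Finset.sum_le_sum_of_subset_of_nonneg (Finset.subset_univ J)
            (fun j _ _ => (hpow i).1 q j)
    _ = 1 := (hpow i).2 q
  have hwl : ∀ i < l, w i = 0 := fun i hi =>
    Finset.sum_eq_zero fun j hj => hJ j hj i hi
  have hf : Summable fun i : ℕ => α ^ i * w i := hW.summable
  -- bound the tail sum
  have hsum_eq : ∑ j ∈ J, (1 - α • S)⁻¹ q j = ∑' i : ℕ, α ^ i * w i := hW.tsum_eq.symm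
  have hshift : (∑ i ∈ Finset.range l, α ^ i * w i) + (∑' i : ℕ, α ^ (i + l) * w (i + l))
      = ∑' i : ℕ, α ^ i * w i := Summable.sum_add_tsum_nat_add l hf
  have hzero : ∑ i ∈ Finset.range l, α ^ i * w i = 0 :=
    Finset.sum_eq_zero fun i hi => by
      rw [hwl i (Finset.mem_range.mp hi), mul_zero]
  have hgsum : Summable fun i : ℕ => α ^ l * α ^ i :=
    (summable_geometric_of_lt_one hα0.le hα1).mul_left _
  have htail : (∑' i : ℕ, α ^ (i + l) * w (i + l)) ≤ α ^ l * (1 - α)⁻¹ := by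
    calc (∑' i : ℕ, α ^ (i + l) * w (i + l)) ≤ ∑' i : ℕ, α ^ l * α ^ i := by
          refine Summable.tsum_le_tsum (fun i => ?_) ((summable_nat_add_iff l).mpr hf) hgsum
          rw [pow_add, mul_comm (α ^ i)]
          calc α ^ l * α ^ i * w (i + l) ≤ α ^ l * α ^ i * 1 := by
                have : (0:ℝ) ≤ α ^ l * α ^ i := by positivity
                nlinarith [hw1 (i + l), hw0 (i + l)]
          _ = α ^ l * α ^ i := mul_one _
    _ = α ^ l * (1 - α)⁻¹ := by
          rw [tsum_mul_left, tsum_geometric_of_lt_one hα0.le hα1]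
  have hT : ∑ j ∈ J, (1 - α • S)⁻¹ q j ≤ α ^ l * (1 - α)⁻¹ := by
    rw [hsum_eq, ← hshift, hzero, zero_add]
    exact htail
  have h1α : (0:ℝ) < 1 - α := by linarith
  calc ∑ j ∈ J, (1 - α) * (1 - α • S)⁻¹ q j
      = (1 - α) * ∑ j ∈ J, (1 - α • S)⁻¹ q j := by rw [Finset.mul_sum]
  _ ≤ (1 - α) * (α ^ l * (1 - α)⁻¹) := by nlinarith
  _ = α ^ l := by field_simp
end

section
/- Let W be a symmetric n×n matrix with entries in {0,1} and zero diagonal whose degrees N_j = Σ_k W_{jk} are all positive; let D = diag(N_1,…,N_n), S = D^{-1}W, and assume the spectral (operator 2-)norm of S is at most 1. Then for every i ≥ 1 and every j, ‖S^i e_j‖_2 ≤ √(N_j) / min_k N_k ≤ √(max_k N_k) / min_k N_k, and consequently for every α ∈ (0,1) and all indices q, j, the normalized heat-kernel weight satisfies (1−α) Σ_{i=0}^∞ α^i (S^i)_{q,j} ≤ (1−α)·1_{{q=j}} + α · √(max_k N_k) / min_k N_k. -/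
open Matrix Finset

/-- **Step 5.2: bounding the heat-kernel weights via the degrees.**  Let `W` be the
symmetric `{0,1}` adjacency matrix of a graph without self-loops, with positive
degrees `N_j = ∑_k W_{jk}`, let `S = D⁻¹W` be the row-normalized transition matrix,
and assume the spectral norm of `S` is at most `1` (i.e. `‖S v‖₂ ≤ ‖v‖₂` for all
`v`).  Then `‖S^i e_j‖₂ ≤ √(N_j)/min_k N_k ≤ √(max_k N_k)/min_k N_k` for all
`i ≥ 1` and `j`, and consequently for every `α ∈ (0,1)` and all `q, j`,
`(1−α) ∑_{i=0}^∞ α^i (S^i)_{q,j} ≤ (1−α)·1_{q=j} + α·√(max_k N_k)/min_k N_k`. -/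
theorem pls_heat_kernel_weight_bound
    (n : ℕ) [NeZero n]
    (W : Matrix (Fin n) (Fin n) ℝ)
    (hsymm : W.IsSymm)
    (h01 : ∀ a b, W a b = 0 ∨ W a b = 1)
    (hdiag : ∀ a, W a a = 0)
    (N : Fin n → ℝ) (hN : ∀ j, N j = ∑ k, W j k)
    (hNpos : ∀ j, 0 < N j)
    (S : Matrix (Fin n) (Fin n) ℝ) (hS : ∀ a b, S a b = W a b / N a)
    (hspec : ∀ v : Fin n → ℝ,
      Real.sqrt (∑ a, (S.mulVec v a) ^ 2) ≤ Real.sqrt (∑ a, (v a) ^ 2)) :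
    (∀ i : ℕ, 1 ≤ i → ∀ j : Fin n,
        Real.sqrt (∑ a, (((S ^ i).mulVec (Pi.single j 1)) a) ^ 2)
            ≤ Real.sqrt (N j) / (⨅ k, N k) ∧
        Real.sqrt (N j) / (⨅ k, N k)
            ≤ Real.sqrt (⨆ k, N k) / (⨅ k, N k)) ∧
    (∀ α : ℝ, 0 < α → α < 1 → ∀ q j : Fin n,
        (1 - α) * ∑' i : ℕ, α ^ i * (S ^ i) q j
          ≤ (1 - α) * (if q = j then 1 else 0)
              + α * Real.sqrt (⨆ k, N k) / (⨅ k, N k)) := by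
  have hn : Nonempty (Fin n) := ⟨⟨0, Nat.pos_of_ne_zero (NeZero.ne n)⟩⟩
  obtain ⟨k0, hk0⟩ := Finite.exists_min N
  have hinf : (⨅ k, N k) = N k0 :=
    le_antisymm (ciInf_le (Finite.bddBelow_range N) k0) (le_ciInf hk0)
  have hinfpos : 0 < ⨅ k, N k := hinf ▸ hNpos k0
  have hinfle : ∀ j, (⨅ k, N k) ≤ N j := fun j => hinf ▸ hk0 j
  have hsuple : ∀ j, N j ≤ ⨆ k, N k := fun j => le_ciSup (Finite.bddAbove_range N) j
  have hWnn : ∀ a b, 0 ≤ W a b := fun a b => by rcases h01 a b with h | h <;> simp [h]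
  have hSnn : ∀ a b, 0 ≤ S a b := fun a b => by
    rw [hS]; exact div_nonneg (hWnn a b) (hNpos a).le
  have hpownn : ∀ i a b, 0 ≤ (S ^ i) a b := by
    intro i
    induction i with
    | zero =>
      intro a b
      simp only [pow_zero, Matrix.one_apply]
      split <;> norm_num
    | succ i ih =>
      intro a b
      rw [pow_succ, Matrix.mul_apply]
      exact Finset.sum_nonneg fun k _ => mul_nonneg (ih a k) (hSnn k b)
  have hmvs : ∀ (M : Matrix (Fin n) (Fin n) ℝ) (j a : Fin n),
      M.mulVec (Pi.single j 1) a = M a j := by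
    intro M j a
    simp [Matrix.mulVec, dotProduct, Pi.single_apply, mul_ite]
  -- column bound for i = 1
  have hcol : ∀ j, Real.sqrt (∑ a, (S.mulVec (Pi.single j 1) a) ^ 2)
      ≤ Real.sqrt (N j) / (⨅ k, N k) := by
    intro j
    have h1 : ∑ a, (S.mulVec (Pi.single j 1) a) ^ 2 ≤ N j / (⨅ k, N k) ^ 2 := by
      have hterm : ∀ a, (S.mulVec (Pi.single j 1) a) ^ 2 ≤ W a j / (⨅ k, N k) ^ 2 := by
        intro a
        rw [hmvs, hS, div_pow]
        have hW2 : (W a j) ^ 2 = W a j := by rcases h01 a j with h | h <;> simp [h]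
        rw [hW2]
        exact div_le_div_of_nonneg_left (hWnn a j) (pow_pos hinfpos 2)
          (pow_le_pow_left₀ hinfpos.le (hinfle a) 2)
      calc ∑ a, (S.mulVec (Pi.single j 1) a) ^ 2 ≤ ∑ a, W a j / (⨅ k, N k) ^ 2 :=
            Finset.sum_le_sum fun a _ => hterm a
        _ = (∑ a, W a j) / (⨅ k, N k) ^ 2 := by rw [Finset.sum_div]
        _ = N j / (⨅ k, N k) ^ 2 := by
            rw [hN]
            congr 1
            exact Finset.sum_congr rfl fun a _ => (hsymm.apply a j).symm
    calc Real.sqrt (∑ a, (S.mulVec (Pi.single j 1) a) ^ 2)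
        ≤ Real.sqrt (N j / (⨅ k, N k) ^ 2) := Real.sqrt_le_sqrt h1
      _ = Real.sqrt (N j) / (⨅ k, N k) := by
          rw [Real.sqrt_div (hNpos j).le, Real.sqrt_sq hinfpos.le]
  -- contraction for all powers
  have hcontr : ∀ (i : ℕ) (v : Fin n → ℝ),
      Real.sqrt (∑ a, ((S ^ i).mulVec v a) ^ 2) ≤ Real.sqrt (∑ a, (v a) ^ 2) := by
    intro i
    induction i with
    | zero => intro v; simp [Matrix.one_mulVec]
    | succ i ih =>
      intro v
      rw [pow_succ, ← Matrix.mulVec_mulVec]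
      exact le_trans (ih (S.mulVec v)) (hspec v)
  have hnorm : ∀ i : ℕ, 1 ≤ i → ∀ j,
      Real.sqrt (∑ a, ((S ^ i).mulVec (Pi.single j 1) a) ^ 2)
        ≤ Real.sqrt (N j) / (⨅ k, N k) := by
    intro i hi j
    obtain ⟨m, rfl⟩ : ∃ m, i = m + 1 := ⟨i - 1, by omega⟩
    rw [pow_succ, ← Matrix.mulVec_mulVec]
    exact le_trans (hcontr m (S.mulVec (Pi.single j 1))) (hcol j)
  have hmono : ∀ j : Fin n, Real.sqrt (N j) / (⨅ k, N k)
      ≤ Real.sqrt (⨆ k, N k) / (⨅ k, N k) := by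
    intro j
    gcongr
    exact hsuple j
  refine ⟨fun i hi j => ⟨hnorm i hi j, hmono j⟩, ?_⟩
  -- entrywise bound
  have hentry : ∀ i : ℕ, 1 ≤ i → ∀ q j : Fin n,
      (S ^ i) q j ≤ Real.sqrt (⨆ k, N k) / (⨅ k, N k) := by
    intro i hi q j
    have h1 : (S ^ i) q j = (S ^ i).mulVec (Pi.single j 1) q := (hmvs _ j q).symm
    have h2 : (S ^ i) q j ≤ Real.sqrt (∑ a, ((S ^ i).mulVec (Pi.single j 1) a) ^ 2) := by
      rw [h1]
      calc (S ^ i).mulVec (Pi.single j 1) q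
          ≤ |(S ^ i).mulVec (Pi.single j 1) q| := le_abs_self _
        _ = Real.sqrt (((S ^ i).mulVec (Pi.single j 1) q) ^ 2) :=
            (Real.sqrt_sq_eq_abs _).symm
        _ ≤ Real.sqrt (∑ a, ((S ^ i).mulVec (Pi.single j 1) a) ^ 2) :=
            Real.sqrt_le_sqrt (Finset.single_le_sum (f := fun a =>
              ((S ^ i).mulVec (Pi.single j 1) a) ^ 2)
              (fun a _ => sq_nonneg _) (Finset.mem_univ q))
    exact h2.trans ((hnorm i hi j).trans (hmono j))
  intro α hα0 hα1 q j
  set C : ℝ := Real.sqrt (⨆ k, N k) / (⨅ k, N k) with hC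
  have hCnn : 0 ≤ C := div_nonneg (Real.sqrt_nonneg _) hinfpos.le
  set f : ℕ → ℝ := fun i => α ^ i * (S ^ i) q j with hf
  have hfnn : ∀ i, 0 ≤ f i := fun i => mul_nonneg (pow_nonneg hα0.le i) (hpownn i q j)
  have hfle : ∀ i, f i ≤ α ^ i * max 1 C := by
    intro i
    rcases Nat.eq_zero_or_pos i with h | h
    · subst h
      simp only [hf, pow_zero, one_mul, Matrix.one_apply]
      split <;> simp [le_max_iff]
    · exact mul_le_mul_of_nonneg_left
        ((hentry i h q j).trans (le_max_right 1 C)) (pow_nonneg hα0.le i)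
  have hgeo : Summable fun i : ℕ => α ^ i * max 1 C :=
    (summable_geometric_of_lt_one hα0.le hα1).mul_right _
  have hsum : Summable f := Summable.of_nonneg_of_le hfnn hfle hgeo
  have hshift : Summable fun i : ℕ => f (i + 1) :=
    (summable_nat_add_iff 1).2 hsum
  have hgsum : Summable fun i : ℕ => α ^ (i + 1) * C := by
    have : (fun i : ℕ => α ^ (i + 1) * C) = fun i : ℕ => α ^ i * (α * C) := by
      funext i; ring
    rw [this]
    exact (summable_geometric_of_lt_one hα0.le hα1).mul_right _
  have htail : ∑' i : ℕ, f (i + 1) ≤ ∑' i : ℕ, α ^ (i + 1) * C := by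
    refine Summable.tsum_le_tsum (fun i => ?_) hshift hgsum
    exact mul_le_mul_of_nonneg_left (hentry (i + 1) (Nat.le_add_left 1 i) q j)
      (pow_nonneg hα0.le (i + 1))
  have hgval : ∑' i : ℕ, α ^ (i + 1) * C = α * C * (1 - α)⁻¹ := by
    have : (fun i : ℕ => α ^ (i + 1) * C) = fun i : ℕ => (α * C) * α ^ i := by
      funext i; ring
    rw [this, tsum_mul_left, tsum_geometric_of_lt_one hα0.le hα1]
  have hzero : f 0 = if q = j then 1 else 0 := by
    simp [hf, Matrix.one_apply]
  have h1α : 0 < 1 - α := by linarith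
  calc (1 - α) * ∑' i : ℕ, f i
      = (1 - α) * (f 0 + ∑' i : ℕ, f (i + 1)) := by rw [Summable.tsum_eq_zero_add hsum]
    _ ≤ (1 - α) * (f 0 + α * C * (1 - α)⁻¹) := by
        have := htail.trans_eq hgval
        nlinarith
    _ = (1 - α) * f 0 + α * C := by
        field_simp
    _ = (1 - α) * (if q = j then 1 else 0) + α * Real.sqrt (⨆ k, N k) / (⨅ k, N k) := by
        rw [hzero, hC]
        ring
end

section
/- Let p : ℝ^d → Δ_C be L-Lipschitz with respect to the Euclidean norms, let x_q ∈ ℝ^d and x_1,…,x_m ∈ ℝ^d, let φ_1,…,φ_m > 0 be weights with Φ = Σ_{j=1}^m φ_j, fix a class c ∈ {1,…,C}, and let Y_1,…,Y_m be independent random variables with Y_j^c ∈ {0,1} and E[Y_j^c] = p(x_j)^c. Define p̂^c = Σ_{j=1}^m (φ_j/Φ) Y_j^c and the bias bound B = Σ_{j=1}^m (φ_j/Φ) · min{1, L‖x_j − x_q‖_2}. Then for every ε > 0, P(|p̂^c − p(x_q)^c| > ε + B) ≤ 2 exp(−2ε^2 / Σ_{j=1}^m (φ_j/Φ)^2). 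-/
open MeasureTheory ProbabilityTheory

lemma bernoulli_mgf_bound {p : ℝ} (hp0 : 0 ≤ p) (hp1 : p ≤ 1) (s : ℝ) :
    1 - p + p * Real.exp s ≤ Real.exp (s * p + s ^ 2 / 8) := by
  have hD : ∀ u : ℝ, 0 < 1 - p + p * Real.exp u := by
    intro u
    rcases lt_or_eq_of_le hp1 with h | h
    · have h1 : 0 ≤ p * Real.exp u := mul_nonneg hp0 (Real.exp_pos u).le
      linarith
    · subst h; simpa using Real.exp_pos u
  have hDd : ∀ u : ℝ, HasDerivAt (fun v : ℝ => 1 - p + p * Real.exp v) (p * Real.exp u) u :=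
    fun u => ((Real.hasDerivAt_exp u).const_mul p).const_add (1 - p)
  set g : ℝ → ℝ := fun u => p + u / 4 - p * Real.exp u / (1 - p + p * Real.exp u) with hgdef
  set f : ℝ → ℝ := fun u => u * p + u ^ 2 / 8 - Real.log (1 - p + p * Real.exp u) with hfdef
  have hfd : ∀ u : ℝ, HasDerivAt f (g u) u := by
    intro u
    have h1 : HasDerivAt (fun v : ℝ => v * p + v ^ 2 / 8) (p + u / 4) u := by
      have := ((hasDerivAt_id u).mul_const p).add ((hasDerivAt_pow 2 u).div_const 8)
      exact this.congr_deriv (by norm_num <;> ring)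
    have h2 : HasDerivAt (fun v : ℝ => Real.log (1 - p + p * Real.exp v))
        (p * Real.exp u / (1 - p + p * Real.exp u)) u := (hDd u).log (hD u).ne'
    exact h1.sub h2
  have hgd : ∀ u : ℝ, HasDerivAt g
      (1 / 4 - (p * Real.exp u * (1 - p + p * Real.exp u) -
        p * Real.exp u * (p * Real.exp u)) / (1 - p + p * Real.exp u) ^ 2) u := by
    intro u
    have h1 : HasDerivAt (fun v : ℝ => p + v / 4) (1 / 4) u := by
      have := (hasDerivAt_id u).div_const (4:ℝ)
      simpa using this.const_add p
    have h2 : HasDerivAt (fun v : ℝ => p * Real.exp v / (1 - p + p * Real.exp v))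
        ((p * Real.exp u * (1 - p + p * Real.exp u) -
          p * Real.exp u * (p * Real.exp u)) / (1 - p + p * Real.exp u) ^ 2) u :=
      ((Real.hasDerivAt_exp u).const_mul p).div (hDd u) (hD u).ne'
    exact h1.sub h2
  have hgmono : Monotone g := by
    refine monotone_of_deriv_nonneg (fun u => (hgd u).differentiableAt) (fun u => ?_)
    rw [(hgd u).deriv]
    have hE := Real.exp_pos u
    have hDu := hD u
    rw [sub_nonneg, div_le_iff₀ (by positivity)]
    nlinarith [sq_nonneg (p * Real.exp u - (1 - p))]
  have hg0 : g 0 = 0 := by simp [hgdef]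
  have hf0 : f 0 = 0 := by simp [hfdef]
  have hfnn : 0 ≤ f s := by
    rcases le_total 0 s with h | h
    · have hmono : MonotoneOn f (Set.Ici 0) := by
        refine monotoneOn_of_deriv_nonneg (convex_Ici 0)
          (fun u _ => (hfd u).differentiableAt.continuousAt.continuousWithinAt)
          (fun u _ => (hfd u).differentiableAt.differentiableWithinAt)
          (fun u hu => ?_)
        rw [(hfd u).deriv]
        rw [interior_Ici] at hu
        calc (0:ℝ) = g 0 := hg0.symm
          _ ≤ g u := hgmono (le_of_lt hu)
      calc (0:ℝ) = f 0 := hf0.symm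
        _ ≤ f s := hmono (by simp) (by simpa using h) h
    · have hanti : AntitoneOn f (Set.Iic 0) := by
        refine antitoneOn_of_deriv_nonpos (convex_Iic 0)
          (fun u _ => (hfd u).differentiableAt.continuousAt.continuousWithinAt)
          (fun u _ => (hfd u).differentiableAt.differentiableWithinAt)
          (fun u hu => ?_)
        rw [(hfd u).deriv]
        rw [interior_Iic] at hu
        calc g u ≤ g 0 := hgmono (le_of_lt hu)
          _ = 0 := hg0
      calc (0:ℝ) = f 0 := hf0.symm
        _ ≤ f s := hanti (by simpa using h) (by simp) h
  have : Real.log (1 - p + p * Real.exp s) ≤ s * p + s ^ 2 / 8 := by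
    have := hfnn; simp only [hfdef] at this; linarith
  exact (Real.log_le_iff_le_exp (hD s)).mp this

lemma scaled_bernoulli_exp_integral
    {Ω : Type*} [MeasureSpace Ω] [IsProbabilityMeasure (ℙ : Measure Ω)]
    (Y : Ω → ℝ) (hY : Measurable Y) (h01 : ∀ ω, Y ω = 0 ∨ Y ω = 1) (w t : ℝ) :
    Integrable (fun ω => Real.exp (t * (w * Y ω))) ℙ ∧
    (∫ ω, Real.exp (t * (w * Y ω)) ∂ℙ)
      = 1 - (∫ ω, Y ω ∂ℙ) + (∫ ω, Y ω ∂ℙ) * Real.exp (t * w) := by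
  have hpt : ∀ ω, Real.exp (t * (w * Y ω)) = 1 + (Real.exp (t * w) - 1) * Y ω := by
    intro ω
    rcases h01 ω with h | h <;> simp [h, mul_one, mul_assoc]
  have hYint : Integrable Y ℙ := by
    refine (integrable_const (1:ℝ)).mono' hY.aestronglyMeasurable (ae_of_all _ fun ω => ?_)
    rcases h01 ω with h | h <;> simp [h]
  have hint : Integrable (fun ω => Real.exp (t * (w * Y ω))) ℙ := by
    simp only [hpt]
    exact (integrable_const 1).add (hYint.const_mul _)
  refine ⟨hint, ?_⟩
  simp only [hpt]
  rw [integral_add (integrable_const 1) (hYint.const_mul _), integral_const,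
    integral_const_mul]
  simp
  ring

open MeasureTheory ProbabilityTheory

lemma hoeffding_bernoulli
    {Ω : Type*} [MeasureSpace Ω] [IsProbabilityMeasure (ℙ : Measure Ω)]
    {m : ℕ} (hm : 0 < m) (w : Fin m → ℝ) (hw : ∀ j, 0 < w j)
    (Y : Fin m → Ω → ℝ) (hmeas : ∀ j, Measurable (Y j))
    (hindep : iIndepFun Y ℙ)
    (h01 : ∀ j ω, Y j ω = 0 ∨ Y j ω = 1)
    {ε : ℝ} (hε : 0 < ε) :
    ℙ {ω | ε ≤ |(∑ j, w j * Y j ω) - ∑ j, w j * (∫ ω', Y j ω' ∂ℙ)|}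
      ≤ ENNReal.ofReal (2 * Real.exp (-2 * ε ^ 2 / ∑ j, w j ^ 2)) := by
  haveI : Nonempty (Fin m) := Fin.pos_iff_nonempty.mp hm
  set P : Fin m → ℝ := fun j => ∫ ω', Y j ω' ∂ℙ with hPdef
  have hP0 : ∀ j, 0 ≤ P j := fun j =>
    integral_nonneg fun ω => by rcases h01 j ω with h | h <;> simp [h]
  have hP1 : ∀ j, P j ≤ 1 := by
    intro j
    calc P j ≤ ∫ _ω', (1:ℝ) ∂ℙ := by
          refine integral_mono ?_ (integrable_const 1) (fun ω => ?_)
          · refine (integrable_const (1:ℝ)).mono' (hmeas j).aestronglyMeasurable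
              (ae_of_all _ fun ω => ?_)
            rcases h01 j ω with h | h <;> simp [h]
          · rcases h01 j ω with h | h <;> simp [h]
      _ = 1 := by simp
  set V : ℝ := ∑ j, w j ^ 2 with hVdef
  have hV : 0 < V := Finset.sum_pos (fun j _ => pow_pos (hw j) 2) Finset.univ_nonempty
  set Z : Fin m → Ω → ℝ := fun j ω => w j * Y j ω with hZdef
  have hmeasZ : ∀ j, Measurable (Z j) := fun j => (hmeas j).const_mul _
  have hindepZ : iIndepFun Z ℙ :=
    hindep.comp (fun j y => w j * y) (fun j => measurable_id.const_mul _)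
  set μS : ℝ := ∑ j, w j * P j with hμSdef
  have hS : ∀ ω, (∑ j, Z j) ω = ∑ j, w j * Y j ω := fun ω => by
    simp [hZdef, Finset.sum_apply]
  -- mgf bound for any t
  have hintj : ∀ (t : ℝ) (j : Fin m), Integrable (fun ω => Real.exp (t * Z j ω)) ℙ :=
    fun t j => (scaled_bernoulli_exp_integral (Y j) (hmeas j) (h01 j) (w j) t).1
  have hintS : ∀ t : ℝ, Integrable (fun ω => Real.exp (t * (∑ j, Z j) ω)) ℙ :=
    fun t => hindepZ.integrable_exp_mul_sum hmeasZ (fun j _ => hintj t j)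
  have hmgf : ∀ t : ℝ, mgf (∑ j, Z j) ℙ t ≤ Real.exp (t * μS + t ^ 2 * V / 8) := by
    intro t
    rw [hindepZ.mgf_sum hmeasZ]
    have hj : ∀ j : Fin m, mgf (Z j) ℙ t ≤ Real.exp (t * w j * P j + (t * w j) ^ 2 / 8) := by
      intro j
      have h2 := (scaled_bernoulli_exp_integral (Y j) (hmeas j) (h01 j) (w j) t).2
      have h3 := bernoulli_mgf_bound (hP0 j) (hP1 j) (t * w j)
      calc mgf (Z j) ℙ t = 1 - P j + P j * Real.exp (t * w j) := h2
        _ ≤ Real.exp (t * w j * P j + (t * w j) ^ 2 / 8) := h3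
    calc ∏ j, mgf (Z j) ℙ t
        ≤ ∏ j, Real.exp (t * w j * P j + (t * w j) ^ 2 / 8) :=
          Finset.prod_le_prod (fun j _ => mgf_nonneg) (fun j _ => hj j)
      _ = Real.exp (∑ j, (t * w j * P j + (t * w j) ^ 2 / 8)) := (Real.exp_sum _ _).symm
      _ = Real.exp (t * μS + t ^ 2 * V / 8) := by
          congr 1
          have : ∀ j : Fin m, t * w j * P j + (t * w j) ^ 2 / 8
              = t * (w j * P j) + t ^ 2 / 8 * w j ^ 2 := fun j => by ring
          simp_rw [this, Finset.sum_add_distrib, ← Finset.mul_sum, hμSdef, hVdef]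
          ring
  set t : ℝ := 4 * ε / V with htdef
  have ht : 0 < t := by positivity
  have hexp : -t * (μS + ε) + (t * μS + t ^ 2 * V / 8) = -2 * ε ^ 2 / V := by
    rw [htdef]; field_simp; ring
  have hexp' : -(-t) * (μS - ε) + (-t * μS + (-t) ^ 2 * V / 8) = -2 * ε ^ 2 / V := by
    rw [htdef]; field_simp; ring
  have hup : (ℙ {ω | μS + ε ≤ (∑ j, Z j) ω}).toReal ≤ Real.exp (-2 * ε ^ 2 / V) := by
    refine (measure_ge_le_exp_mul_mgf (μS + ε) ht.le (hintS t)).trans ?_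
    calc Real.exp (-t * (μS + ε)) * mgf (∑ j, Z j) ℙ t
        ≤ Real.exp (-t * (μS + ε)) * Real.exp (t * μS + t ^ 2 * V / 8) := by
          exact mul_le_mul_of_nonneg_left (hmgf t) (Real.exp_pos _).le
      _ = Real.exp (-2 * ε ^ 2 / V) := by rw [← Real.exp_add, hexp]
  have hdown : (ℙ {ω | (∑ j, Z j) ω ≤ μS - ε}).toReal ≤ Real.exp (-2 * ε ^ 2 / V) := by
    refine (measure_le_le_exp_mul_mgf (μS - ε) (neg_nonpos.mpr ht.le) (hintS (-t))).trans ?_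
    calc Real.exp (-(-t) * (μS - ε)) * mgf (∑ j, Z j) ℙ (-t)
        ≤ Real.exp (-(-t) * (μS - ε)) * Real.exp (-t * μS + (-t) ^ 2 * V / 8) := by
          exact mul_le_mul_of_nonneg_left (hmgf (-t)) (Real.exp_pos _).le
      _ = Real.exp (-2 * ε ^ 2 / V) := by rw [← Real.exp_add, hexp']
  have hsub : {ω | ε ≤ |(∑ j, w j * Y j ω) - ∑ j, w j * P j|}
      ⊆ {ω | μS + ε ≤ (∑ j, Z j) ω} ∪ {ω | (∑ j, Z j) ω ≤ μS - ε} := by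
    intro ω hω
    simp only [Set.mem_setOf_eq] at hω
    rcases le_abs.mp hω with h | h
    · left; simp only [Set.mem_setOf_eq, hS]; linarith
    · right; simp only [Set.mem_setOf_eq, hS]; linarith
  calc ℙ {ω | ε ≤ |(∑ j, w j * Y j ω) - ∑ j, w j * P j|}
      ≤ ℙ ({ω | μS + ε ≤ (∑ j, Z j) ω} ∪ {ω | (∑ j, Z j) ω ≤ μS - ε}) := measure_mono hsub
    _ ≤ ℙ {ω | μS + ε ≤ (∑ j, Z j) ω} + ℙ {ω | (∑ j, Z j) ω ≤ μS - ε} := measure_union_le _ _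
    _ ≤ ENNReal.ofReal (Real.exp (-2 * ε ^ 2 / V)) + ENNReal.ofReal (Real.exp (-2 * ε ^ 2 / V)) := by
        gcongr
        · rw [← ENNReal.ofReal_toReal (measure_ne_top ℙ _)]
          exact ENNReal.ofReal_le_ofReal hup
        · rw [← ENNReal.ofReal_toReal (measure_ne_top ℙ _)]
          exact ENNReal.ofReal_le_ofReal hdown
    _ = ENNReal.ofReal (2 * Real.exp (-2 * ε ^ 2 / V)) := by
        rw [← ENNReal.ofReal_add (Real.exp_pos _).le (Real.exp_pos _).le]
        ring_nf


lemma euclid_abs_apply_le_norm {n : ℕ} (v : EuclideanSpace ℝ (Fin n)) (i : Fin n) :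
    |v i| ≤ ‖v‖ := by
  rw [EuclideanSpace.norm_eq]
  calc |v i| = Real.sqrt (‖v i‖ ^ 2) := by
        rw [Real.sqrt_sq_eq_abs]; simp [Real.norm_eq_abs]
    _ ≤ Real.sqrt (∑ j, ‖v j‖ ^ 2) :=
        Real.sqrt_le_sqrt (Finset.single_le_sum (f := fun j => ‖v j‖ ^ 2)
          (fun j _ => sq_nonneg _) (Finset.mem_univ i))


/-- **Single-class confidence interval for the PLS estimate.**  Let
`p : ℝ^d → Δ_C` be `L`-Lipschitz, let `φ_1, …, φ_m > 0` with `Φ = ∑ φ_j`, fix a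
class `c`, and let `Y_1, …, Y_m` be independent with `Y_j^c ∈ {0,1}` and
`E[Y_j^c] = p(x_j)^c`.  With `p̂^c = ∑_j (φ_j/Φ)·Y_j^c` and bias bound
`B = ∑_j (φ_j/Φ)·min{1, L‖x_j − x_q‖}`, for every `ε > 0`,
`P(|p̂^c − p(x_q)^c| > ε + B) ≤ 2 exp(−2ε²/∑_j (φ_j/Φ)²)`. -/
theorem pls_single_class_confidence_interval
    {Ω : Type*} [MeasureSpace Ω] [IsProbabilityMeasure (ℙ : Measure Ω)]
    (d C m : ℕ)
    (p : EuclideanSpace ℝ (Fin d) → EuclideanSpace ℝ (Fin C))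
    (hsimplex : ∀ x, (∀ c, 0 ≤ p x c) ∧ ∑ c, p x c = 1)
    (L : NNReal) (hLip : LipschitzWith L p)
    (xq : EuclideanSpace ℝ (Fin d)) (x : Fin m → EuclideanSpace ℝ (Fin d))
    (φ : Fin m → ℝ) (hφ : ∀ j, 0 < φ j)
    (c : Fin C)
    (Y : Fin m → Ω → ℝ)
    (hmeas : ∀ j, Measurable (Y j))
    (hindep : iIndepFun Y ℙ)
    (h01 : ∀ j ω, Y j ω = 0 ∨ Y j ω = 1)
    (hmean : ∀ j, (∫ ω, Y j ω ∂ℙ) = p (x j) c) :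
    ∀ ε : ℝ, 0 < ε →
      ℙ {ω | |(∑ j, (φ j / ∑ i, φ i) * Y j ω) - p xq c|
              > ε + ∑ j, (φ j / ∑ i, φ i) * min 1 ((L : ℝ) * ‖x j - xq‖)}
        ≤ ENNReal.ofReal (2 * Real.exp (-2 * ε ^ 2 / ∑ j, (φ j / ∑ i, φ i) ^ 2)) := by
  intro ε hε
  rcases Nat.eq_zero_or_pos m with hm | hm
  · subst hm
    have h2 : (1 : ENNReal) ≤ ENNReal.ofReal (2 * Real.exp (-2 * ε ^ 2 / ∑ j : Fin 0, (φ j / ∑ i, φ i) ^ 2)) := by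
      simp only [Finset.univ_eq_empty, Finset.sum_empty]
      rw [ENNReal.one_le_ofReal]
      norm_num [Real.exp_zero]
    exact le_trans prob_le_one h2
  haveI : Nonempty (Fin m) := Fin.pos_iff_nonempty.mp hm
  have hΦ : 0 < ∑ i, φ i := Finset.sum_pos (fun i _ => hφ i) Finset.univ_nonempty
  set w : Fin m → ℝ := fun j => φ j / ∑ i, φ i with hwdef
  have hw : ∀ j, 0 < w j := fun j => div_pos (hφ j) hΦ
  have hwsum : ∑ j, w j = 1 := by
    rw [hwdef, ← Finset.sum_div, div_self hΦ.ne']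
  -- bounds on components of p
  have hp01 : ∀ z, 0 ≤ p z c ∧ p z c ≤ 1 := by
    intro z
    refine ⟨(hsimplex z).1 c, ?_⟩
    have h := (hsimplex z).2
    have h2 := Finset.single_le_sum (f := fun i => p z i)
      (fun i _ => (hsimplex z).1 i) (Finset.mem_univ c)
    linarith
  have hcomp : ∀ a b, |p a c - p b c| ≤ min 1 ((L : ℝ) * ‖a - b‖) := by
    intro a b
    refine le_min ?_ ?_
    · rw [abs_le]
      constructor <;> linarith [(hp01 a).1, (hp01 a).2, (hp01 b).1, (hp01 b).2]
    · have h1 : |p a c - p b c| = |(p a - p b) c| := by norm_num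
      have h2 := euclid_abs_apply_le_norm (p a - p b) c
      have h3 := hLip.dist_le_mul a b
      rw [dist_eq_norm, dist_eq_norm] at h3
      calc |p a c - p b c| = |(p a - p b) c| := h1
        _ ≤ ‖p a - p b‖ := h2
        _ ≤ (L : ℝ) * ‖a - b‖ := h3
  -- bias bound
  have hbias : |(∑ j, w j * (∫ ω', Y j ω' ∂ℙ)) - p xq c|
      ≤ ∑ j, w j * min 1 ((L : ℝ) * ‖x j - xq‖) := by
    have heq : (∑ j, w j * (∫ ω', Y j ω' ∂ℙ)) - p xq c
        = ∑ j, w j * (p (x j) c - p xq c) := by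
      simp_rw [hmean, mul_sub]
      rw [Finset.sum_sub_distrib, ← Finset.sum_mul, hwsum, one_mul]
    rw [heq]
    calc |∑ j, w j * (p (x j) c - p xq c)| ≤ ∑ j, |w j * (p (x j) c - p xq c)| :=
          Finset.abs_sum_le_sum_abs _ _
      _ ≤ ∑ j, w j * min 1 ((L : ℝ) * ‖x j - xq‖) := by
          refine Finset.sum_le_sum (fun j _ => ?_)
          rw [abs_mul, abs_of_pos (hw j)]
          exact mul_le_mul_of_nonneg_left (hcomp (x j) xq) (hw j).le
  -- event inclusion
  have hsub : {ω | |(∑ j, w j * Y j ω) - p xq c|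
        > ε + ∑ j, w j * min 1 ((L : ℝ) * ‖x j - xq‖)}
      ⊆ {ω | ε ≤ |(∑ j, w j * Y j ω) - ∑ j, w j * (∫ ω', Y j ω' ∂ℙ)|} := by
    intro ω hω
    simp only [Set.mem_setOf_eq] at hω ⊢
    have h3 := abs_sub_abs_le_abs_sub ((∑ j, w j * Y j ω) - p xq c)
      ((∑ j, w j * (∫ ω', Y j ω' ∂ℙ)) - p xq c)
    rw [sub_sub_sub_cancel_right] at h3
    linarith
  exact le_trans (measure_mono hsub)
    (hoeffding_bernoulli hm w hw Y hmeas hindep h01 hε)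
end
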